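/- arXiv:math/9904110 — 4 statements merged into one kernel-verified Lean document; each statement's English description precedes it below -/
import Mathlib

section
/- For all natural numbers n, p, k with p ≤ n and k ≥ 1, one has the identity ∑_{j=0}^{p} (-1)^{j} · C(n-j, p-j) · C(n+k-j, k) · C(n+1, j) = C(n+k-p, k) · C(k-1, p), where the sum is taken in the integers. -/
open Finset

/-- Pascal split for alternating sums. -/
lemma bott_split (m W : ℕ) (A : ℕ → ℤ) :
    ∑ j ∈ range (W + 1), (-1 : ℤ) ^ j * A j * ((m + 1).choose j)
      = ∑ j ∈ range (W + 1), (-1 : ℤ) ^ j * A j * (m.choose j)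
        - ∑ j ∈ range W, (-1 : ℤ) ^ j * A (j + 1) * (m.choose j) := by
  rw [Finset.sum_range_succ' (fun j => (-1 : ℤ) ^ j * A j * ((m + 1).choose j)),
      Finset.sum_range_succ' (fun j => (-1 : ℤ) ^ j * A j * (m.choose j))]
  rw [eq_sub_iff_add_eq]
  have h : ∀ x y z : ℤ, x + y + z = (x + z) + y := by intros; ring
  rw [h]
  congr 1
  · rw [← Finset.sum_add_distrib]
    apply Finset.sum_congr rfl
    intro i _
    simp only [Nat.choose_succ_succ, Nat.cast_add]
    ring
  · simp

def bottSum (P q m : ℕ) : ℤ :=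
  ∑ j ∈ range (P + 1), (-1 : ℤ) ^ j * ((q + P - j).choose m) * (P.choose j)

lemma bottSum_step (p q m : ℕ) :
    bottSum (p + 1) q m = bottSum p (q + 1) m - bottSum p q m := by
  unfold bottSum
  rw [bott_split p (p + 1) (fun j => ((q + (p + 1) - j).choose m : ℤ))]
  congr 1
  · rw [Finset.sum_range_succ]
    have e0 : (p.choose (p + 1) : ℤ) = 0 := by simp [Nat.choose_succ_self]
    rw [e0, mul_zero, add_zero]
    apply Finset.sum_congr rfl
    intro j hj
    have e : q + (p + 1) - j = q + 1 + p - j := by omega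
    rw [e]
  · apply Finset.sum_congr rfl
    intro j hj
    have e : q + (p + 1) - (j + 1) = q + p - j := by omega
    rw [e]

lemma bottSum_eq (p : ℕ) : ∀ q m : ℕ, m ≤ q → bottSum p q m = ((q.choose (p + q - m) : ℤ)) := by
  induction p with
  | zero =>
    intro q m h
    simp only [bottSum, zero_add, Finset.sum_range_one, pow_zero, Nat.choose_self,
      Nat.choose_zero_right, Nat.cast_one, mul_one, one_mul, Nat.add_zero, Nat.sub_zero]
    rw [Nat.choose_symm h]
  | succ p ih =>
    intro q m h
    rw [bottSum_step, ih (q + 1) m (by omega), ih q m h]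
    have e : q + 1 = (q + 1) := rfl
    have hp : p + (q + 1) - m = (p + q - m) + 1 := by omega
    rw [hp, Nat.choose_succ_succ' ]
    have : p + 1 + q - m = p + q - m + 1 := by omega
    rw [this]
    push_cast
    ring

lemma bottSum_zero (q m : ℕ) : bottSum 0 q m = (q.choose m : ℤ) := by
  simp [bottSum]

lemma bottSum_sp (p : ℕ) : ∀ q : ℕ, bottSum (p + 1) q (q + 1) = ((q.choose p : ℤ)) := by
  induction p with
  | zero =>
    intro q
    rw [bottSum_step, bottSum_zero, bottSum_zero]
    simp [Nat.choose_succ_self]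
  | succ p ih =>
    intro q
    rw [bottSum_step, ih q, bottSum_eq (p + 1) (q + 1) (q + 1) (le_refl _)]
    have e : p + 1 + (q + 1) - (q + 1) = p + 1 := by omega
    rw [e, Nat.choose_succ_succ']
    push_cast
    ring

def bott (n p k : ℕ) : ℤ :=
  ∑ j ∈ range (p + 1),
    (-1 : ℤ) ^ j * ((n - j).choose (p - j)) * ((n + k - j).choose k) * ((n + 1).choose j)

lemma bott_diag (p k : ℕ) : bott p p (k + 1) = ((k.choose p : ℤ)) := by
  rw [← bottSum_sp p k]
  have h : bottSum (p + 1) k (k + 1) = bott p p (k + 1) := by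
    unfold bott bottSum
    rw [Finset.sum_range_succ]
    have e0 : ((k + (p + 1) - (p + 1)).choose (k + 1) : ℤ) = 0 := by
      have e : k + (p + 1) - (p + 1) = k := by omega
      rw [e]; simp [Nat.choose_succ_self]
    rw [e0]
    simp only [mul_zero, zero_mul, add_zero]
    apply Finset.sum_congr rfl
    intro j hj
    have e1 : (p - j).choose (p - j) = 1 := Nat.choose_self _
    have e2 : p + (k + 1) - j = k + (p + 1) - j := by omega
    rw [e1, e2]
    push_cast
    ring
  rw [h]

lemma bott_k1 (a p : ℕ) : bott (a + p) p 1 = ((a : ℤ) + 1) * ((0 : ℕ).choose p : ℤ) := by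
  have key : ∀ j ∈ range (p + 1),
      (-1 : ℤ) ^ j * ((a + p - j).choose (p - j)) * ((a + p + 1 - j).choose 1) *
          ((a + p + 1).choose j)
        = ((a : ℤ) + (p : ℤ) + 1) * (((a + p).choose p : ℤ)) * ((-1 : ℤ) ^ j * (p.choose j)) := by
    intro j hj
    have hjp : j ≤ p := by simpa [Nat.lt_succ_iff] using hj
    have hA := Nat.choose_succ_right_eq (a + p + 1) j
    have hB := Nat.add_one_mul_choose_eq (a + p) j
    have h1nat : (a + p + 1 - j) * (a + p + 1).choose j = (a + p + 1) * (a + p).choose j := by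
      calc (a + p + 1 - j) * (a + p + 1).choose j
          = (a + p + 1).choose j * (a + p + 1 - j) := Nat.mul_comm _ _
        _ = (a + p + 1).choose (j + 1) * (j + 1) := hA.symm
        _ = (a + p + 1) * (a + p).choose j := hB.symm
    have h2nat : (a + p).choose p * p.choose j = (a + p).choose j * (a + p - j).choose (p - j) :=
      Nat.choose_mul hjp
    have h1 : ((a + p + 1 - j : ℕ) : ℤ) * (((a + p + 1).choose j : ℕ) : ℤ)
        = ((a : ℤ) + (p : ℤ) + 1) * (((a + p).choose j : ℕ) : ℤ) := by
      have := congrArg (Nat.cast : ℕ → ℤ) h1nat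
      push_cast at this
      linarith [this]
    have h2 : (((a + p).choose p : ℕ) : ℤ) * ((p.choose j : ℕ) : ℤ)
        = (((a + p).choose j : ℕ) : ℤ) * (((a + p - j).choose (p - j) : ℕ) : ℤ) := by
      exact_mod_cast h2nat
    have e1 : (a + p + 1 - j).choose 1 = a + p + 1 - j := Nat.choose_one_right _
    rw [e1]
    linear_combination ((-1 : ℤ) ^ j * (((a + p - j).choose (p - j) : ℕ) : ℤ)) * h1
      - ((a : ℤ) + (p : ℤ) + 1) * (-1 : ℤ) ^ j * h2
  unfold bott
  rw [Finset.sum_congr rfl key, ← Finset.mul_sum, Int.alternating_sum_range_choose]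
  cases p with
  | zero => simp
  | succ q => simp

lemma bott_stepA (n p K : ℕ) :
    bott (n + 1) (p + 1) K
      = (∑ j ∈ range (p + 2),
          (-1 : ℤ) ^ j * ((n + 1 - j).choose (p + 1 - j)) * ((n + 1 + K - j).choose K) *
            ((n + 1).choose j))
        - bott n p K := by
  have hs : (∑ j ∈ range (p + 1 + 1), (-1 : ℤ) ^ j *
        (((n + 1 - j).choose (p + 1 - j) : ℤ) * ((n + 1 + K - j).choose K)) *
        ((n + 1 + 1).choose j))
      = (∑ j ∈ range (p + 1 + 1), (-1 : ℤ) ^ j *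
          (((n + 1 - j).choose (p + 1 - j) : ℤ) * ((n + 1 + K - j).choose K)) *
          ((n + 1).choose j))
        - ∑ j ∈ range (p + 1), (-1 : ℤ) ^ j *
            (((n + 1 - (j + 1)).choose (p + 1 - (j + 1)) : ℤ) *
              ((n + 1 + K - (j + 1)).choose K)) * ((n + 1).choose j) :=
    bott_split (n + 1) (p + 1)
      (fun j => (((n + 1 - j).choose (p + 1 - j) : ℤ)) * ((n + 1 + K - j).choose K))
  have l1 : bott (n + 1) (p + 1) K
      = ∑ j ∈ range (p + 1 + 1), (-1 : ℤ) ^ j *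
          (((n + 1 - j).choose (p + 1 - j) : ℤ) * ((n + 1 + K - j).choose K)) *
          ((n + 1 + 1).choose j) := by
    unfold bott
    apply Finset.sum_congr rfl
    intro j hj
    ring
  have l2 : (∑ j ∈ range (p + 1 + 1), (-1 : ℤ) ^ j *
        (((n + 1 - j).choose (p + 1 - j) : ℤ) * ((n + 1 + K - j).choose K)) *
        ((n + 1).choose j))
      = ∑ j ∈ range (p + 2),
          (-1 : ℤ) ^ j * ((n + 1 - j).choose (p + 1 - j)) * ((n + 1 + K - j).choose K) *
            ((n + 1).choose j) := by
    apply Finset.sum_congr rfl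
    intro j hj
    ring
  have l3 : (∑ j ∈ range (p + 1), (-1 : ℤ) ^ j *
        (((n + 1 - (j + 1)).choose (p + 1 - (j + 1)) : ℤ) *
          ((n + 1 + K - (j + 1)).choose K)) * ((n + 1).choose j))
      = bott n p K := by
    unfold bott
    apply Finset.sum_congr rfl
    intro j hj
    have e1 : n + 1 - (j + 1) = n - j := by omega
    have e2 : p + 1 - (j + 1) = p - j := by omega
    have e3 : n + 1 + K - (j + 1) = n + K - j := by omega
    rw [e1, e2, e3]
    ring
  rw [l1, hs, l2, l3]

lemma bott_rec (n p k : ℕ) (hpn : p ≤ n) :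
    bott (n + 1) (p + 1) (k + 2)
      = bott n (p + 1) (k + 2) + bott (n + 1) (p + 1) (k + 1) + bott n p (k + 1) := by
  have hA2 := bott_stepA n p (k + 2)
  have hA1 := bott_stepA n p (k + 1)
  have hB : (∑ j ∈ range (p + 2),
        (-1 : ℤ) ^ j * ((n + 1 - j).choose (p + 1 - j)) * ((n + 1 + (k + 2) - j).choose (k + 2)) *
          ((n + 1).choose j))
      = (∑ j ∈ range (p + 2),
          (-1 : ℤ) ^ j * ((n + 1 - j).choose (p + 1 - j)) *
            ((n + 1 + (k + 1) - j).choose (k + 2)) * ((n + 1).choose j))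
        + (∑ j ∈ range (p + 2),
          (-1 : ℤ) ^ j * ((n + 1 - j).choose (p + 1 - j)) *
            ((n + 1 + (k + 1) - j).choose (k + 1)) * ((n + 1).choose j)) := by
    rw [← Finset.sum_add_distrib]
    apply Finset.sum_congr rfl
    intro j hj
    have hj' : j ≤ p + 1 := by simpa [Nat.lt_succ_iff] using hj
    have e : n + 1 + (k + 2) - j = (n + 1 + (k + 1) - j) + 1 := by omega
    rw [e, Nat.choose_succ_succ (n + 1 + (k + 1) - j) (k + 1)]
    push_cast
    ring
  have hC : (∑ j ∈ range (p + 2),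
        (-1 : ℤ) ^ j * ((n + 1 - j).choose (p + 1 - j)) *
          ((n + 1 + (k + 1) - j).choose (k + 2)) * ((n + 1).choose j))
      = bott n (p + 1) (k + 2) + bott n p (k + 2) := by
    have h1 : bott n (p + 1) (k + 2)
        = (∑ j ∈ range (p + 1),
            (-1 : ℤ) ^ j * ((n - j).choose (p + 1 - j)) * ((n + (k + 2) - j).choose (k + 2)) *
              ((n + 1).choose j))
          + (-1 : ℤ) ^ (p + 1) * ((n - (p + 1)).choose (p + 1 - (p + 1))) *
              ((n + (k + 2) - (p + 1)).choose (k + 2)) * ((n + 1).choose (p + 1)) := by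
      unfold bott
      exact Finset.sum_range_succ _ _
    have h2 : (∑ j ∈ range (p + 2),
          (-1 : ℤ) ^ j * ((n + 1 - j).choose (p + 1 - j)) *
            ((n + 1 + (k + 1) - j).choose (k + 2)) * ((n + 1).choose j))
        = (∑ j ∈ range (p + 1),
            (-1 : ℤ) ^ j * ((n + 1 - j).choose (p + 1 - j)) *
              ((n + 1 + (k + 1) - j).choose (k + 2)) * ((n + 1).choose j))
          + (-1 : ℤ) ^ (p + 1) * ((n + 1 - (p + 1)).choose (p + 1 - (p + 1))) *
              ((n + 1 + (k + 1) - (p + 1)).choose (k + 2)) * ((n + 1).choose (p + 1)) :=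
      Finset.sum_range_succ _ _
    have h3 : (∑ j ∈ range (p + 1),
          (-1 : ℤ) ^ j * ((n + 1 - j).choose (p + 1 - j)) *
            ((n + 1 + (k + 1) - j).choose (k + 2)) * ((n + 1).choose j))
        = (∑ j ∈ range (p + 1),
            (-1 : ℤ) ^ j * ((n - j).choose (p + 1 - j)) * ((n + (k + 2) - j).choose (k + 2)) *
              ((n + 1).choose j))
          + bott n p (k + 2) := by
      unfold bott
      rw [← Finset.sum_add_distrib]
      apply Finset.sum_congr rfl
      intro j hj
      have hjp : j ≤ p := by simpa [Nat.lt_succ_iff] using hj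
      have e1 : n + 1 - j = (n - j) + 1 := by omega
      have e2 : p + 1 - j = (p - j) + 1 := by omega
      have e3 : n + 1 + (k + 1) - j = n + (k + 2) - j := by omega
      rw [e1, e2, e3, Nat.choose_succ_succ (n - j) (p - j)]
      simp only [Nat.succ_eq_add_one]
      have e4 : (p - j) + 1 = p + 1 - j := by omega
      rw [e4]
      push_cast
      ring
    have h4 : (-1 : ℤ) ^ (p + 1) * ((n + 1 - (p + 1)).choose (p + 1 - (p + 1))) *
          ((n + 1 + (k + 1) - (p + 1)).choose (k + 2)) * ((n + 1).choose (p + 1))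
        = (-1 : ℤ) ^ (p + 1) * ((n - (p + 1)).choose (p + 1 - (p + 1))) *
            ((n + (k + 2) - (p + 1)).choose (k + 2)) * ((n + 1).choose (p + 1)) := by
      have e1 : p + 1 - (p + 1) = 0 := by omega
      have e2 : n + 1 + (k + 1) - (p + 1) = n + (k + 2) - (p + 1) := by omega
      rw [e1, e2, Nat.choose_zero_right, Nat.choose_zero_right]
    rw [h2, h3, h1]
    rw [h4]
    ring
  rw [hA2, hA1, hB, hC]
  ring

lemma bott_gen (k : ℕ) : ∀ a p : ℕ,
    bott (a + p) p (k + 1) = (((a + k + 1).choose (k + 1) : ℕ) : ℤ) * (k.choose p : ℤ) := by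
  induction k with
  | zero =>
    intro a p
    rw [bott_k1]
    rw [show a + 0 + 1 = a + 1 from rfl, Nat.choose_one_right]
    push_cast
    ring
  | succ k ih =>
    intro a
    induction a with
    | zero =>
      intro p
      rw [Nat.zero_add, bott_diag p (k + 1)]
      rw [show 0 + (k + 1) + 1 = k + 2 from by omega, Nat.choose_self]
      push_cast
      ring
    | succ a iha =>
      intro p
      cases p with
      | zero =>
        have hb : bott (a + 1 + 0) 0 (k + 2) = ((a + 1 + 0 + (k + 2) - 0).choose (k + 2) : ℤ) := by
          simp [bott]
        rw [hb, show a + 1 + 0 + (k + 2) - 0 = a + 1 + (k + 1) + 1 from by omega]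
        simp
      | succ q =>
        have e1 : a + 1 + (q + 1) = (a + q + 1) + 1 := by omega
        rw [e1, bott_rec (a + q + 1) q k (by omega)]
        have r1 : bott (a + q + 1) (q + 1) (k + 2)
            = (((a + (k + 1) + 1).choose (k + 2) : ℕ) : ℤ) * ((k + 1).choose (q + 1) : ℤ) :=
          iha (q + 1)
        have r2 : bott (a + q + 1 + 1) (q + 1) (k + 1)
            = (((a + 1) + k + 1).choose (k + 1) : ℤ) * (k.choose (q + 1) : ℤ) := by
          have h := ih (a + 1) (q + 1)
          rw [show (a + 1) + (q + 1) = a + q + 1 + 1 from by omega] at h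
          exact h
        have r3 : bott (a + q + 1) q (k + 1)
            = (((a + 1) + k + 1).choose (k + 1) : ℤ) * (k.choose q : ℤ) := by
          have h := ih (a + 1) q
          rw [show (a + 1) + q = a + q + 1 from by omega] at h
          exact h
        rw [r1, r2, r3]
        have eA : (a + 1) + k + 1 = a + k + 2 := by omega
        have eB : a + (k + 1) + 1 = a + k + 2 := by omega
        have eC : (a + 1) + (k + 1) + 1 = (a + k + 2) + 1 := by omega
        rw [eA, eB, eC]
        rw [Nat.choose_succ_succ (a + k + 2) (k + 1), Nat.choose_succ_succ k q]
        push_cast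
        ring

theorem stmt_1 (n p k : ℕ) (hpn : p ≤ n) (hk : 1 ≤ k) :
    ∑ j ∈ Finset.range (p + 1),
      (-1 : ℤ) ^ j * (Nat.choose (n - j) (p - j)) * (Nat.choose (n + k - j) k) *
        (Nat.choose (n + 1) j)
      = (Nat.choose (n + k - p) k) * (Nat.choose (k - 1) p) := by
  obtain ⟨a, rfl⟩ := Nat.exists_eq_add_of_le' hpn
  obtain ⟨k', rfl⟩ := Nat.exists_eq_add_of_le hk
  rw [show 1 + k' = k' + 1 from Nat.add_comm 1 k']
  have h := bott_gen k' a p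
  unfold bott at h
  rw [show a + p + (k' + 1) - p = a + k' + 1 from by omega,
    show k' + 1 - 1 = k' from by omega]
  exact h
end

section
/- For all natural numbers n, p, k with p ≤ n and k ≥ 1, one has the identity of natural numbers ∑_{s=p}^{n} C(s, p) · C(k-1, s) · C(n+1, n-s) = C(n+k-p, k) · C(k-1, p). -/
lemma trinom_aux (m p s : ℕ) (hps : p ≤ s) :
    Nat.choose s p * Nat.choose m s = Nat.choose m p * Nat.choose (m - p) (s - p) := by
  rcases le_or_gt s m with hsm | hms
  · rw [mul_comm, Nat.choose_mul hps]
  · rcases le_or_gt p m with hpm | hmp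
    · rw [Nat.choose_eq_zero_of_lt hms, Nat.choose_eq_zero_of_lt (by omega : m - p < s - p)]
      simp
    · rw [Nat.choose_eq_zero_of_lt hms, Nat.choose_eq_zero_of_lt hmp]
      simp

theorem stmt_3 (n p k : ℕ) (hpn : p ≤ n) (hk : 1 ≤ k) :
    ∑ s ∈ Finset.Icc p n,
      Nat.choose s p * Nat.choose (k - 1) s * Nat.choose (n + 1) (n - s)
      = Nat.choose (n + k - p) k * Nat.choose (k - 1) p := by
  set m := k - 1 with hm
  have hkm : k = m + 1 := by omega
  rcases le_or_gt p m with hpm | hmp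
  · have step : ∑ s ∈ Finset.Icc p n,
        Nat.choose s p * Nat.choose m s * Nat.choose (n + 1) (n - s)
        = Nat.choose m p * ∑ s ∈ Finset.Icc p n,
            Nat.choose (m - p) (s - p) * Nat.choose (n + 1) (n - s) := by
      rw [Finset.mul_sum]
      refine Finset.sum_congr rfl fun s hs => ?_
      have hps : p ≤ s := (Finset.mem_Icc.mp hs).1
      rw [trinom_aux m p s hps, mul_assoc]
    rw [step]
    have hV := Nat.add_choose_eq (m - p) (n + 1) (n - p)
    rw [Finset.Nat.sum_antidiagonal_eq_sum_range_succ_mk] at hV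
    have hsum : ∑ s ∈ Finset.Icc p n, Nat.choose (m - p) (s - p) * Nat.choose (n + 1) (n - s)
        = ∑ i ∈ Finset.range (n - p + 1),
            Nat.choose (m - p) i * Nat.choose (n + 1) (n - p - i) := by
      rw [← Finset.Ico_add_one_right_eq_Icc, Finset.sum_Ico_eq_sum_range]
      have : n + 1 - p = n - p + 1 := by omega
      rw [this]
      refine Finset.sum_congr rfl fun i hi => ?_
      congr 1
      · congr 1; omega
      · congr 1; omega
    rw [hsum, ← hV]
    have h1 : m - p + (n + 1) = n + k - p := by omega
    have h2 : n + k - p = (n - p) + k := by omega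
    rw [h1, Nat.choose_symm_of_eq_add h2, mul_comm]
  · have : ∀ s ∈ Finset.Icc p n,
        Nat.choose s p * Nat.choose m s * Nat.choose (n + 1) (n - s) = 0 := by
      intro s hs
      have hps : p ≤ s := (Finset.mem_Icc.mp hs).1
      rw [Nat.choose_eq_zero_of_lt (by omega : m < s)]
      ring
    rw [Finset.sum_congr rfl this, Finset.sum_const, smul_eq_mul, mul_zero,
      Nat.choose_eq_zero_of_lt hmp, mul_zero]
end

section
/- For all natural numbers n, s, p with s ≤ n and p ≤ n, one has the identity ∑_{j=0}^{n-s} (-1)^{j} · C(n-j, p) · C(n-s, j) = C(s, n-p), where the sum is taken in the integers. -/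
private def S (m n p : ℕ) : ℤ :=
  ∑ j ∈ Finset.range (m + 1), (-1 : ℤ) ^ j * ((n - j).choose p) * (m.choose j)

private lemma S_step (m n p : ℕ) : S (m + 1) n p = S m n p - S m (n - 1) p := by
  have hg : ∀ g : ℕ → ℤ, ∑ i ∈ Finset.range (m + 1), g (i + 1)
      = (∑ j ∈ Finset.range (m + 1), g j) + g (m + 1) - g 0 := by
    intro g
    rw [← Finset.sum_range_succ]
    rw [Finset.sum_range_succ' g (m + 1)]
    ring
  unfold S
  rw [Finset.sum_range_succ' (fun j => (-1 : ℤ) ^ j * ((n - j).choose p) * ((m+1).choose j)) (m+1)]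
  have expand : ∀ i, ((-1 : ℤ) ^ (i+1) * ((n - (i+1)).choose p) * ((m+1).choose (i+1)))
      = (-(-1:ℤ)^i * ((n - 1 - i).choose p) * (m.choose i))
        + ((-1:ℤ)^(i+1) * ((n - (i+1)).choose p) * (m.choose (i+1))) := by
    intro i
    have h1 : n - (i + 1) = n - 1 - i := by omega
    rw [Nat.choose_succ_succ, h1]
    push_cast
    ring
  rw [Finset.sum_congr rfl (fun i _ => expand i), Finset.sum_add_distrib]
  rw [hg (fun j => (-1:ℤ)^j * ((n - j).choose p) * (m.choose j))]
  simp [Nat.choose_succ_self]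
  ring

private lemma aux : ∀ m n p : ℕ, m ≤ n → S m n p = if m ≤ p then ((n - m).choose (p - m) : ℤ) else 0 := by
  intro m
  induction m with
  | zero => intro n p _; simp [S]
  | succ m ih =>
    intro n p hmn
    rw [S_step, ih n p (by omega), ih (n-1) p (by omega)]
    by_cases h1 : m + 1 ≤ p
    · have h2 : m ≤ p := by omega
      simp only [h1, h2, if_pos]
      have e1 : n - m = (n - (m+1)) + 1 := by omega
      have e2 : p - m = (p - (m+1)) + 1 := by omega
      rw [e1, e2, Nat.choose_succ_succ]
      have e3 : n - 1 - m = n - (m+1) := by omega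
      rw [e3]
      push_cast; ring
    · by_cases h2 : m ≤ p
      · have hp : p = m := by omega
        simp [h1, h2, hp]
      · simp [h1, h2]

theorem stmt_4 (n s p : ℕ) (hsn : s ≤ n) (hpn : p ≤ n) :
    ∑ j ∈ Finset.range (n - s + 1),
      (-1 : ℤ) ^ j * (Nat.choose (n - j) p) * (Nat.choose (n - s) j)
      = Nat.choose s (n - p) := by
  have := aux (n - s) n p (by omega)
  rw [show (∑ j ∈ Finset.range (n - s + 1),
      (-1 : ℤ) ^ j * (Nat.choose (n - j) p) * (Nat.choose (n - s) j)) = S (n - s) n p from rfl, this]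
  by_cases h : n - s ≤ p
  · rw [if_pos h]
    have e1 : n - (n - s) = s := by omega
    rw [e1]
    have hk : p - (n - s) ≤ s := by omega
    rw [show n - p = s - (p - (n - s)) by omega, Nat.choose_symm hk]
  · rw [if_neg h]
    have : s < n - p := by omega
    rw [Nat.choose_eq_zero_of_lt this]
    simp
end

section
/- Let m ≥ 1 and k ≥ 1 be integers, and let Δ ⊂ ℝ^3 be the convex hull of the four points (0,0,0), (1,0,0), (0,1,0), and (1,1,m). Then the number of points x ∈ ℤ^3 whose image in ℝ^3 lies in the dilated polytope k·Δ equals (m·k^3 + 6·k^2 + (12-m)·k + 6)/6. -/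
open scoped Pointwise

private theorem reeve_Icc_succ (k : ℤ) (hk : 0 ≤ k) :
    Finset.Icc (0:ℤ) (k+1) = insert (k+1) (Finset.Icc 0 k) := by
  ext x; simp [Finset.mem_Icc]; omega

private theorem reeve_sum_id (k : ℤ) (hk : 0 ≤ k) :
    2 * ∑ a ∈ Finset.Icc (0:ℤ) k, a = k * (k+1) := by
  obtain ⟨n, rfl⟩ : ∃ n : ℕ, k = n := ⟨k.toNat, (Int.toNat_of_nonneg hk).symm⟩
  induction n with
  | zero => simp
  | succ n ih =>
    push_cast
    rw [reeve_Icc_succ n (by positivity), Finset.sum_insert (by simp)]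
    have := ih (by positivity)
    linear_combination this

private theorem reeve_sum_min (k : ℤ) (hk : 0 ≤ k) :
    6 * ∑ a ∈ Finset.Icc (0:ℤ) k, ∑ b ∈ Finset.Icc (0:ℤ) k, min a b
      = k * (k+1) * (2*k+1) := by
  obtain ⟨n, rfl⟩ : ∃ n : ℕ, k = n := ⟨k.toNat, (Int.toNat_of_nonneg hk).symm⟩
  induction n with
  | zero => simp
  | succ n ih =>
    push_cast
    have hn : (0:ℤ) ≤ n := by positivity
    have ih' := ih hn
    have h2 : ∀ b ∈ Finset.Icc (0:ℤ) n, min ((n:ℤ)+1) b = b := by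
      intro b hb; simp only [Finset.mem_Icc] at hb; omega
    have inner : ∀ a ∈ Finset.Icc (0:ℤ) n,
        ∑ b ∈ insert ((n:ℤ)+1) (Finset.Icc (0:ℤ) (n:ℤ)), min a b
          = a + ∑ b ∈ Finset.Icc (0:ℤ) n, min a b := by
      intro a ha
      rw [Finset.sum_insert (by simp)]
      simp only [Finset.mem_Icc] at ha
      rw [min_eq_left (by omega)]
    rw [reeve_Icc_succ n hn, Finset.sum_insert (by simp), Finset.sum_insert (by simp),
        Finset.sum_congr rfl h2, Finset.sum_congr rfl inner, Finset.sum_add_distrib]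
    have hs := reeve_sum_id n hn
    simp only [min_self]
    linear_combination ih' + 6 * hs

private theorem reeve_sum_maxsub (k : ℤ) (hk : 0 ≤ k) :
    6 * ∑ a ∈ Finset.Icc (0:ℤ) k, ∑ b ∈ Finset.Icc (0:ℤ) k, max 0 (b - a)
      = k * (k+1) * (k+2) := by
  obtain ⟨n, rfl⟩ : ∃ n : ℕ, k = n := ⟨k.toNat, (Int.toNat_of_nonneg hk).symm⟩
  induction n with
  | zero => simp
  | succ n ih =>
    push_cast
    have hn : (0:ℤ) ≤ n := by positivity
    have ih' := ih hn
    have h2 : ∀ b ∈ Finset.Icc (0:ℤ) n, max 0 (b - ((n:ℤ)+1)) = 0 := by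
      intro b hb; simp only [Finset.mem_Icc] at hb; omega
    have inner : ∀ a ∈ Finset.Icc (0:ℤ) n,
        ∑ b ∈ insert ((n:ℤ)+1) (Finset.Icc (0:ℤ) (n:ℤ)), max 0 (b - a)
          = ((n:ℤ) + 1 - a) + ∑ b ∈ Finset.Icc (0:ℤ) n, max 0 (b - a) := by
      intro a ha
      rw [Finset.sum_insert (by simp)]
      simp only [Finset.mem_Icc] at ha
      rw [max_eq_right (by omega)]
    rw [reeve_Icc_succ n hn, Finset.sum_insert (by simp), Finset.sum_insert (by simp),
        Finset.sum_congr rfl h2, Finset.sum_congr rfl inner, Finset.sum_add_distrib,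
        Finset.sum_sub_distrib, Finset.sum_const]
    have hs := reeve_sum_id n hn
    have hcard : ((Finset.Icc (0:ℤ) n).card : ℤ) = n + 1 := by
      rw [Int.card_Icc]; omega
    have hconst : ((Finset.Icc (0:ℤ) n).card • ((n:ℤ)+1)) = ((n:ℤ)+1) * ((n:ℤ)+1) := by
      rw [nsmul_eq_mul, hcard]
    rw [Finset.sum_const, hconst]
    simp only [smul_zero]
    simp only [sub_self, max_self]
    linear_combination ih' - 3 * hs

private theorem reeve_reflect_sum (k : ℤ) (f : ℤ → ℤ) :
    ∑ a ∈ Finset.Icc (0:ℤ) k, f a = ∑ a ∈ Finset.Icc (0:ℤ) k, f (k - a) := by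
  refine Finset.sum_nbij' (fun i => k - i) (fun i => k - i) ?_ ?_ ?_ ?_ ?_ <;>
    intro a ha <;> simp only [Finset.mem_Icc] at ha ⊢ <;>
      first
        | omega
        | rw [sub_sub_cancel]

private theorem reeve_sum_main (m k : ℤ) (hm : 1 ≤ m) (hk : 1 ≤ k) :
    6 * ∑ a ∈ Finset.Icc (0:ℤ) k, ∑ b ∈ Finset.Icc (0:ℤ) k,
        (m * min a b + 1 - m * max 0 (a + b - k))
      = m * k ^ 3 + 6 * k ^ 2 + (12 - m) * k + 6 := by
  have hk0 : (0:ℤ) ≤ k := by omega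
  have smin := reeve_sum_min k hk0
  have smax := reeve_sum_maxsub k hk0
  have hrefl : ∑ a ∈ Finset.Icc (0:ℤ) k, ∑ b ∈ Finset.Icc (0:ℤ) k, max 0 (a + b - k)
      = ∑ a ∈ Finset.Icc (0:ℤ) k, ∑ b ∈ Finset.Icc (0:ℤ) k, max 0 (b - a) := by
    rw [reeve_reflect_sum k (fun a => ∑ b ∈ Finset.Icc (0:ℤ) k, max 0 (a + b - k))]
    apply Finset.sum_congr rfl
    intro a _
    apply Finset.sum_congr rfl
    intro b _
    congr 1
    omega
  have hcard : ((Finset.Icc (0:ℤ) k).card : ℤ) = k + 1 := by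
    rw [Int.card_Icc]; omega
  have expand : ∑ a ∈ Finset.Icc (0:ℤ) k, ∑ b ∈ Finset.Icc (0:ℤ) k,
        (m * min a b + 1 - m * max 0 (a + b - k))
      = m * (∑ a ∈ Finset.Icc (0:ℤ) k, ∑ b ∈ Finset.Icc (0:ℤ) k, min a b)
        + (k+1) * (k+1)
        - m * (∑ a ∈ Finset.Icc (0:ℤ) k, ∑ b ∈ Finset.Icc (0:ℤ) k, max 0 (b - a)) := by
    rw [← hrefl]
    simp only [Finset.sum_sub_distrib, Finset.sum_add_distrib, Finset.sum_const,
      ← Finset.mul_sum, nsmul_eq_mul, hcard, mul_one]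
    ring
  rw [expand]
  nlinarith [smin, smax]

private theorem reeve_fiber_eq (m k : ℤ) (hm : 1 ≤ m) (a b : ℤ)
    (ha : 0 ≤ a ∧ a ≤ k) (hb : 0 ≤ b ∧ b ≤ k) :
    ((Finset.Icc (0:ℤ) k ×ˢ Finset.Icc (0:ℤ) k ×ˢ Finset.Icc (0:ℤ) (m*k)).filter
        (fun t : ℤ × ℤ × ℤ => 0 ≤ t.2.2 ∧ t.2.2 ≤ m * t.1 ∧ t.2.2 ≤ m * t.2.1 ∧
          m * (t.1 + t.2.1 - k) ≤ t.2.2)).filter (fun x => (x.1, x.2.1) = (a, b))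
      = (Finset.Icc (m * max 0 (a + b - k)) (m * min a b)).image (fun c => (a, b, c)) := by
  have hm0 : (0:ℤ) ≤ m := by omega
  ext x
  simp only [Finset.mem_filter, Finset.mem_product, Finset.mem_image, Finset.mem_Icc,
    Prod.mk.injEq]
  constructor
  · rintro ⟨⟨⟨⟨ha1, ha2⟩, ⟨hb1, hb2⟩, hc1, hc2⟩, q1, q2, q3, q4⟩, e1, e2⟩
    subst e1; subst e2
    refine ⟨x.2.2, ⟨?_, ?_⟩, ?_⟩
    · rw [mul_max_of_nonneg _ _ hm0, mul_zero]
      exact max_le q1 q4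
    · rw [mul_min_of_nonneg _ _ hm0]
      exact le_min q2 q3
    · rfl
  · rintro ⟨c, ⟨hc1, hc2⟩, rfl, rfl, rfl⟩
    rw [mul_max_of_nonneg _ _ hm0, mul_zero] at hc1
    rw [mul_min_of_nonneg _ _ hm0] at hc2
    have h0c : 0 ≤ c := le_trans (le_max_left _ _) hc1
    have hcma : c ≤ m * a := le_trans hc2 (min_le_left _ _)
    have hcmb : c ≤ m * b := le_trans hc2 (min_le_right _ _)
    have hmk : m * a ≤ m * k := mul_le_mul_of_nonneg_left (by omega) hm0
    exact ⟨⟨⟨⟨ha.1, ha.2⟩, ⟨hb.1, hb.2⟩, h0c, hcma.trans hmk⟩,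
      h0c, hcma, hcmb, le_trans (le_max_right _ _) hc1⟩, rfl, rfl⟩

private theorem reeve_card_F (m k : ℤ) (hm : 1 ≤ m) (hk : 1 ≤ k) :
    (((Finset.Icc (0:ℤ) k ×ˢ Finset.Icc (0:ℤ) k ×ˢ Finset.Icc (0:ℤ) (m*k)).filter
        (fun t : ℤ × ℤ × ℤ => 0 ≤ t.2.2 ∧ t.2.2 ≤ m * t.1 ∧ t.2.2 ≤ m * t.2.1 ∧
          m * (t.1 + t.2.1 - k) ≤ t.2.2)).card : ℤ)
      = ∑ a ∈ Finset.Icc (0:ℤ) k, ∑ b ∈ Finset.Icc (0:ℤ) k,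
          (m * min a b + 1 - m * max 0 (a + b - k)) := by
  have hm0 : (0:ℤ) ≤ m := by omega
  set F := (Finset.Icc (0:ℤ) k ×ˢ Finset.Icc (0:ℤ) k ×ˢ Finset.Icc (0:ℤ) (m*k)).filter
        (fun t : ℤ × ℤ × ℤ => 0 ≤ t.2.2 ∧ t.2.2 ≤ m * t.1 ∧ t.2.2 ≤ m * t.2.1 ∧
          m * (t.1 + t.2.1 - k) ≤ t.2.2) with hF
  have hmap : ∀ x ∈ F, (x.1, x.2.1) ∈ Finset.Icc (0:ℤ) k ×ˢ Finset.Icc (0:ℤ) k := by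
    intro x hx
    simp only [hF, Finset.mem_filter, Finset.mem_product] at hx
    simp only [Finset.mem_product]
    exact ⟨hx.1.1, hx.1.2.1⟩
  rw [Finset.card_eq_sum_card_fiberwise hmap]
  push_cast
  rw [Finset.sum_product]
  apply Finset.sum_congr rfl
  intro a ha
  apply Finset.sum_congr rfl
  intro b hb
  simp only [Finset.mem_Icc] at ha hb
  rw [hF, reeve_fiber_eq m k hm a b ha hb,
    Finset.card_image_of_injective _ (fun u v huv => by simpa using huv),
    Int.card_Icc]
  have hle : m * max 0 (a + b - k) ≤ m * min a b :=
    mul_le_mul_of_nonneg_left (by omega) hm0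
  rw [Int.toNat_of_nonneg (by omega)]

private theorem reeve_hull_sub (m : ℝ) (hm : 1 ≤ m) :
    convexHull ℝ ({![0, 0, 0], ![1, 0, 0], ![0, 1, 0], ![1, 1, m]} : Set (Fin 3 → ℝ)) ⊆
      {p : Fin 3 → ℝ | 0 ≤ p 2 ∧ p 2 ≤ m * p 0 ∧ p 2 ≤ m * p 1 ∧ m * (p 0 + p 1 - 1) ≤ p 2} := by
  apply convexHull_min
  · intro p hp
    simp only [Set.mem_insert_iff, Set.mem_singleton_iff] at hp
    rcases hp with h | h | h | h <;> subst h <;> refine ⟨?_, ?_, ?_, ?_⟩ <;> simp <;> nlinarith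
  · intro p hp q hq a b ha hb hab
    obtain ⟨h1, h2, h3, h4⟩ := hp
    obtain ⟨g1, g2, g3, g4⟩ := hq
    refine ⟨?_, ?_, ?_, ?_⟩ <;>
      simp only [Pi.add_apply, Pi.smul_apply, smul_eq_mul] <;> nlinarith

private theorem reeve_sub_hull (m : ℝ) (hm : 1 ≤ m) (p : Fin 3 → ℝ)
    (h1 : 0 ≤ p 2) (h2 : p 2 ≤ m * p 0) (h3 : p 2 ≤ m * p 1)
    (h4 : m * (p 0 + p 1 - 1) ≤ p 2) :
    p ∈ convexHull ℝ ({![0, 0, 0], ![1, 0, 0], ![0, 1, 0], ![1, 1, m]} : Set (Fin 3 → ℝ)) := by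
  have hm0 : (0:ℝ) < m := by linarith
  set d : ℝ := p 2 / m with hd
  have hdm : m * d = p 2 := by rw [hd]; field_simp [ne_of_gt hm0]
  set w : Fin 4 → ℝ := ![1 - p 0 - p 1 + d, p 0 - d, p 1 - d, d] with hw
  set z : Fin 4 → (Fin 3 → ℝ) := ![![0,0,0], ![1,0,0], ![0,1,0], ![1,1,m]] with hz
  have hsum : ∑ i ∈ Finset.univ, w i = 1 := by
    simp [hw, Fin.sum_univ_four]; ring
  have hw0 : ∀ i ∈ (Finset.univ : Finset (Fin 4)), 0 ≤ w i := by
    intro i _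
    have hd0 : 0 ≤ d := by positivity
    have hdle0 : d ≤ p 0 := by rw [hd, div_le_iff₀ hm0]; nlinarith
    have hdle1 : d ≤ p 1 := by rw [hd, div_le_iff₀ hm0]; nlinarith
    have hdge : p 0 + p 1 - 1 ≤ d := by rw [hd, le_div_iff₀ hm0]; nlinarith
    fin_cases i <;> simp [hw] <;> linarith
  have key : Finset.univ.centerMass w z = p := by
    rw [Finset.centerMass_eq_of_sum_1 _ _ hsum]
    funext j
    fin_cases j <;>
      simp [hz, hw, Fin.sum_univ_four, Matrix.vecHead, Matrix.vecTail] <;> linarith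
  have := Finset.centerMass_mem_convexHull (Finset.univ : Finset (Fin 4)) hw0
    (by rw [hsum]; norm_num)
    (z := z) (s := ({![0, 0, 0], ![1, 0, 0], ![0, 1, 0], ![1, 1, m]} : Set (Fin 3 → ℝ)))
    (by intro i _; fin_cases i <;> simp [hz])
  rwa [key] at this

private theorem reeve_mem_iff (m k : ℤ) (hm : 1 ≤ m) (hk : 1 ≤ k) (x : Fin 3 → ℤ) :
    ((fun i => (x i : ℝ)) ∈
        (k : ℝ) • convexHull ℝ
          ({![0, 0, 0], ![1, 0, 0], ![0, 1, 0], ![1, 1, (m : ℝ)]} : Set (Fin 3 → ℝ)))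
      ↔ (0 ≤ x 2 ∧ x 2 ≤ m * x 0 ∧ x 2 ≤ m * x 1 ∧ m * (x 0 + x 1 - k) ≤ x 2) := by
  have hmr : (1:ℝ) ≤ (m:ℝ) := by exact_mod_cast hm
  have hk0 : (0:ℝ) < (k:ℝ) := by exact_mod_cast (by omega : (0:ℤ) < k)
  constructor
  · rintro ⟨q, hq, hqe⟩
    obtain ⟨h1, h2, h3, h4⟩ := reeve_hull_sub (m:ℝ) hmr hq
    have e0 : (x 0 : ℝ) = k * q 0 := (congrFun hqe 0).symm
    have e1 : (x 1 : ℝ) = k * q 1 := (congrFun hqe 1).symm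
    have e2 : (x 2 : ℝ) = k * q 2 := (congrFun hqe 2).symm
    have c0 : (0:ℝ) ≤ (x 2 : ℝ) := by rw [e2]; positivity
    have c1 : (x 2 : ℝ) ≤ (m:ℝ) * (x 0 : ℝ) := by rw [e0, e2]; nlinarith
    have c2 : (x 2 : ℝ) ≤ (m:ℝ) * (x 1 : ℝ) := by rw [e1, e2]; nlinarith
    have c3 : (m:ℝ) * ((x 0 : ℝ) + (x 1 : ℝ) - (k:ℝ)) ≤ (x 2 : ℝ) := by
      rw [e0, e1, e2]; nlinarith
    refine ⟨by exact_mod_cast c0, by exact_mod_cast c1, by exact_mod_cast c2, ?_⟩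
    exact_mod_cast c3
  · rintro ⟨h1, h2, h3, h4⟩
    set p : Fin 3 → ℝ := fun i => (x i : ℝ) with hp
    have c0 : (0:ℝ) ≤ p 2 := by simp only [hp]; exact_mod_cast h1
    have c1 : p 2 ≤ (m:ℝ) * p 0 := by simp only [hp]; exact_mod_cast h2
    have c2 : p 2 ≤ (m:ℝ) * p 1 := by simp only [hp]; exact_mod_cast h3
    have c3 : (m:ℝ) * (p 0 + p 1 - (k:ℝ)) ≤ p 2 := by
      simp only [hp]
      exact_mod_cast h4
    set q : Fin 3 → ℝ := (k:ℝ)⁻¹ • p with hq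
    have hqe : ∀ i, q i = (k:ℝ)⁻¹ * p i := fun i => rfl
    have hki : (0:ℝ) < (k:ℝ)⁻¹ := by positivity
    have hkk : (k:ℝ) * (k:ℝ)⁻¹ = 1 := mul_inv_cancel₀ (ne_of_gt hk0)
    refine ⟨q, reeve_sub_hull (m:ℝ) hmr q ?_ ?_ ?_ ?_, smul_inv_smul₀ (ne_of_gt hk0) p⟩
    · rw [hqe]; positivity
    · rw [hqe, hqe]; nlinarith [mul_nonneg hki.le (sub_nonneg.mpr c1)]
    · rw [hqe, hqe]; nlinarith [mul_nonneg hki.le (sub_nonneg.mpr c2)]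
    · rw [hqe, hqe, hqe]; nlinarith [mul_nonneg hki.le (sub_nonneg.mpr c3), hkk]

theorem stmt_8 (m k : ℤ) (hm : 1 ≤ m) (hk : 1 ≤ k) :
    (Nat.card {x : Fin 3 → ℤ //
        (fun i => (x i : ℝ)) ∈
          (k : ℝ) • convexHull ℝ
            ({![0, 0, 0], ![1, 0, 0], ![0, 1, 0], ![1, 1, (m : ℝ)]} : Set (Fin 3 → ℝ))} : ℤ)
      = (m * k ^ 3 + 6 * k ^ 2 + (12 - m) * k + 6) / 6 := by
  have hm0 : (0:ℤ) ≤ m := by omega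
  set F := (Finset.Icc (0:ℤ) k ×ˢ Finset.Icc (0:ℤ) k ×ˢ Finset.Icc (0:ℤ) (m*k)).filter
        (fun t : ℤ × ℤ × ℤ => 0 ≤ t.2.2 ∧ t.2.2 ≤ m * t.1 ∧ t.2.2 ≤ m * t.2.1 ∧
          m * (t.1 + t.2.1 - k) ≤ t.2.2) with hF
  have e : {x : Fin 3 → ℤ //
        (fun i => (x i : ℝ)) ∈
          (k : ℝ) • convexHull ℝ
            ({![0, 0, 0], ![1, 0, 0], ![0, 1, 0], ![1, 1, (m : ℝ)]} : Set (Fin 3 → ℝ))}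
      ≃ {t : ℤ × ℤ × ℤ // t ∈ F} := by
    refine Equiv.subtypeEquiv
      (⟨fun x => (x 0, x 1, x 2), fun t => ![t.1, t.2.1, t.2.2],
        by intro x; funext i; fin_cases i <;> rfl, by intro t; rfl⟩ :
        (Fin 3 → ℤ) ≃ ℤ × ℤ × ℤ) ?_
    intro x
    rw [reeve_mem_iff m k hm hk x]
    simp only [hF, Finset.mem_filter, Finset.mem_product, Finset.mem_Icc]
    constructor
    · rintro ⟨h1, h2, h3, h4⟩
      have hx0 : 0 ≤ x 0 := by
        by_contra hcon
        push_neg at hcon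
        nlinarith [mul_nonneg (by omega : (0:ℤ) ≤ m - 1) (by omega : (0:ℤ) ≤ -(x 0))]
      have hx1 : 0 ≤ x 1 := by
        by_contra hcon
        push_neg at hcon
        nlinarith [mul_nonneg (by omega : (0:ℤ) ≤ m - 1) (by omega : (0:ℤ) ≤ -(x 1))]
      have hx0k : x 0 ≤ k := by
        by_contra hcon
        push_neg at hcon
        nlinarith [mul_nonneg (by omega : (0:ℤ) ≤ m - 1) (by omega : (0:ℤ) ≤ x 0 - k)]
      have hx1k : x 1 ≤ k := by
        by_contra hcon
        push_neg at hcon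
        nlinarith [mul_nonneg (by omega : (0:ℤ) ≤ m - 1) (by omega : (0:ℤ) ≤ x 1 - k)]
      have hx2k : x 2 ≤ m * k :=
        h2.trans (mul_le_mul_of_nonneg_left hx0k hm0)
      exact ⟨⟨⟨hx0, hx0k⟩, ⟨hx1, hx1k⟩, h1, hx2k⟩, h1, h2, h3, h4⟩
    · rintro ⟨⟨_, _, _, _⟩, h1, h2, h3, h4⟩
      exact ⟨h1, h2, h3, h4⟩
  rw [Nat.card_congr e, Nat.card_eq_finsetCard]
  have h6 : 6 * (F.card : ℤ) = m * k ^ 3 + 6 * k ^ 2 + (12 - m) * k + 6 := by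
    rw [hF, reeve_card_F m k hm hk]
    exact reeve_sum_main m k hm hk
  rw [← h6, Int.mul_ediv_cancel_left _ (by norm_num)]
end
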